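/- Let M be an uncountable quasiminimal structure (every M-definable subset of M is countable or co-countable) and p ∈ S₁(M) the generic type consisting of the co-countable formulas. If (M, cl_p) is a quasiminimal pregeometry structure where cl_p(A) = { x ∈ M : x does not realize p restricted to A }, then p does not split over ∅: whenever tp(b̄/∅) = tp(b̄'/∅), for every formula φ the set φ(M, b̄) is countable iff φ(M, b̄') is countable. -/

import Mathlib

open FirstOrder Set

namespace QM

/-- Equality of quantifier-free types of two assignments (possibly in different structures). -/
def EqQF (L : FirstOrder.Language) {M N : Type*} [L.Structure M] [L.Structure N]
    {α : Type*} (a : α → M) (b : α → N) : Prop :=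
  ∀ φ : L.Formula α, φ.IsQF → (φ.Realize a ↔ φ.Realize b)

/-- Equality of quantifier-free types over a parameter set `B`. -/
def EqQFOver (L : FirstOrder.Language) {M : Type*} [L.Structure M] (B : Set M) {n : ℕ}
    (a b : Fin n → M) : Prop :=
  ∀ (m : ℕ) (c : Fin m → M), (∀ i, c i ∈ B) →
    EqQF L (Sum.elim a c) (Sum.elim b c)

/-- A pregeometry (combinatorial closure with exchange). -/
structure Pregeom (M : Type*) where
  cl : Set M → Set M
  subset_cl : ∀ A, A ⊆ cl A
  mono : ∀ ⦃A B : Set M⦄, A ⊆ B → cl A ⊆ cl B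
  cl_idem : ∀ A, cl (cl A) = cl A
  finChar : ∀ (A : Set M) (x : M), x ∈ cl A → ∃ F : Finset M, ↑F ⊆ A ∧ x ∈ cl ↑F
  exchange : ∀ (A : Set M) (a b : M), a ∈ cl (insert b A) → a ∉ cl A → b ∈ cl (insert a A)

variable (L : FirstOrder.Language) (M : Type*) [L.Structure M] (P : Pregeom M)

def Indep (P : Pregeom M) (S : Set M) : Prop := ∀ x ∈ S, x ∉ P.cl (S \ {x})

/-- QM1: the pregeometry is determined by the language. -/
def QM1 : Prop :=
  ∀ (n : ℕ) (a a' : M) (b b' : Fin n → M),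
    EqQF L (Fin.cons a b) (Fin.cons a' b') →
    (a ∈ P.cl (Set.range b) ↔ a' ∈ P.cl (Set.range b'))

/-- QM2: infinite-dimensionality. -/
def QM2 : Prop := ∀ F : Finset M, P.cl ↑F ≠ Set.univ

/-- QM3: countable closure property. -/
def QM3 : Prop := ∀ F : Finset M, (P.cl ↑F).Countable

/-- QM4: uniqueness of the generic type. -/
def QM4 : Prop :=
  ∀ (ι : Type) [Countable ι] (h h' : ι → M),
    P.cl (Set.range h) = Set.range h → P.cl (Set.range h') = Set.range h' →
    EqQF L h h' →
    ∀ a a' : M, a ∉ Set.range h → a' ∉ Set.range h' →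
      EqQF L (Sum.elim h fun _ : Unit => a) (Sum.elim h' fun _ : Unit => a')

/-- QM5: ℵ₀-homogeneity over countable closed sets and the empty set. -/
def QM5 : Prop :=
  ∀ (ι : Type) [Countable ι] (h h' : ι → M) (n : ℕ) (b b' : Fin n → M),
    (P.cl (Set.range h) = Set.range h ∨ Set.range h = ∅) →
    (P.cl (Set.range h') = Set.range h' ∨ Set.range h' = ∅) →
    EqQF L (Sum.elim h b) (Sum.elim h' b') →
    ∀ a ∈ P.cl (Set.range h ∪ Set.range b),
      ∃ a' : M, EqQF L (Sum.elim (Sum.elim h b) fun _ : Unit => a)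
        (Sum.elim (Sum.elim h' b') fun _ : Unit => a')

/-- A weakly quasiminimal pregeometry structure: QM1, QM3, QM4, QM5. -/
structure IsWQPS : Prop where
  qm1 : QM1 L M P
  qm3 : QM3 M P
  qm4 : QM4 L M P
  qm5 : QM5 L M P

/-- A quasiminimal pregeometry structure: additionally QM2. -/
structure IsQPS extends IsWQPS L M P : Prop where
  qm2 : QM2 M P

/-- ℵ₀-homogeneity over the empty set. -/
def HomogEmpty : Prop :=
  ∀ (n m : ℕ) (b b' : Fin n → M), EqQF L b b' →
    ∀ a : Fin m → M, ∃ a' : Fin m → M, EqQF L (Sum.elim a b) (Sum.elim a' b')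

/-- `tp(ā/B)` splits over `A`. -/
def SplitsOver (B A : Set M) {n : ℕ} (a : Fin n → M) : Prop :=
  ∃ (m : ℕ) (c d : Fin m → M), (∀ i, c i ∈ B) ∧ (∀ i, d i ∈ B) ∧
    EqQFOver L A c d ∧ ¬ EqQFOver L (A ∪ Set.range a) c d

/-- `tp(b̄/B)` is s-isolated (for `b̄ ∈ cl B`). -/
def SIsolated (B : Set M) {n : ℕ} (b : Fin n → M) : Prop :=
  ∃ A₀ : Finset M, ↑A₀ ⊆ B ∧
    ∀ b' : Fin n → M, (∀ i, b' i ∈ P.cl B) →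
      EqQFOver L (↑A₀ : Set M) b' b → EqQFOver L B b' b


/-- The solution set `φ(M, b̄)` of a formula with parameters `b̄`. -/
def solSet (L : FirstOrder.Language) (M : Type*) [L.Structure M] {n : ℕ}
    (φ : L.Formula (Fin (n + 1))) (b : Fin n → M) : Set M :=
  {x : M | φ.Realize (Fin.cons x b)}

/-- `M` is quasiminimal: every definable subset (with parameters) is countable or
co-countable. -/
def Quasiminimal (L : FirstOrder.Language) (M : Type*) [L.Structure M] : Prop :=
  ∀ (n : ℕ) (φ : L.Formula (Fin (n + 1))) (b : Fin n → M),
    (solSet L M φ b).Countable ∨ (solSet L M φ b)ᶜ.Countable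

/-- The quasiminimal closure: `x ∈ cl_p A` iff `x` does not realize the generic
(co-countable) type over `A`, i.e. `x` satisfies some countable formula over `A`. -/
def clp (L : FirstOrder.Language) (M : Type*) [L.Structure M] (A : Set M) : Set M :=
  {x : M | ∃ (n : ℕ) (φ : L.Formula (Fin (n + 1))) (b : Fin n → M),
    (∀ i, b i ∈ A) ∧ (solSet L M φ b).Countable ∧ x ∈ solSet L M φ b}

/-- Equality of complete first-order types. -/
def EqFull (L : FirstOrder.Language) {M : Type*} [L.Structure M] {α : Type*}
    (a b : α → M) : Prop :=
  ∀ φ : L.Formula α, φ.Realize a ↔ φ.Realize b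

/-- Quantifier elimination for types realized in `M`: quantifier-free types determine
complete types. -/
def QEr (L : FirstOrder.Language) (M : Type*) [L.Structure M] : Prop :=
  ∀ (n : ℕ) (a b : Fin n → M), EqQF L a b → EqFull L a b

section Aux
set_option linter.unusedSectionVars false

variable {L} {M} [L.Structure M]

theorem EqQF.symm' {α : Type*} {a b : α → M} (h : EqQF L a b) : EqQF L b a :=
  fun φ hφ => (h φ hφ).symm

theorem EqQF.comp' {α β : Type*} {a b : α → M} (h : EqQF L a b) (f : β → α) :
    EqQF L (a ∘ f) (b ∘ f) := by
  intro φ hφ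
  rw [← FirstOrder.Language.Formula.realize_relabel,
    ← FirstOrder.Language.Formula.realize_relabel]
  exact h _ (hφ.relabel _)

theorem realize_ext {α : Type*} [DecidableEq α] {v w : α → M} (φ : L.Formula α)
    (h : ∀ x ∈ φ.freeVarFinset, v x = w x) : φ.Realize v ↔ φ.Realize w := by
  have key : (v ∘ (Subtype.val : (↑(φ.freeVarFinset : Set α)) → α))
      = w ∘ Subtype.val := funext fun x => h x.1 x.2
  unfold FirstOrder.Language.Formula.Realize
  rw [← Language.BoundedFormula.realize_restrictFreeVar'
      (Set.Subset.rfl : (↑φ.freeVarFinset : Set α) ⊆ ↑φ.freeVarFinset), key,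
    Language.BoundedFormula.realize_restrictFreeVar']

theorem exists_not_mem_countable [Uncountable M] {s : Set M} (hs : s.Countable) :
    ∃ a, a ∉ s := by
  by_contra hcon
  push_neg at hcon
  exact Set.not_countable_univ ((Set.eq_univ_of_forall hcon) ▸ hs)

end Aux
section Aux2
set_option linter.unusedSectionVars false
set_option maxHeartbeats 1000000

variable {L} {M} [L.Structure M] {P : Pregeom M}

theorem ext_step (h5 : QM5 L M P) {m : ℕ} {c c' : Fin m → M} (hE : EqQF L c c')
    (x : M) (hx : x ∈ P.cl (Set.range c)) :
    ∃ x', EqQF L (Fin.snoc c x) (Fin.snoc c' x') := by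
  have e : ∀ d : Fin m → M,
      Sum.elim (Empty.elim : Empty → M) d = d ∘ Sum.elim (fun e : Empty => e.elim) id := by
    intro d; funext z; cases z with
    | inl e => exact e.elim
    | inr i => rfl
  have h0 : EqQF L (Sum.elim (Empty.elim : Empty → M) c) (Sum.elim Empty.elim c') := by
    rw [e, e]; exact hE.comp' _
  obtain ⟨x', hx'⟩ := h5 Empty Empty.elim Empty.elim m c c'
    (Or.inr (Set.range_eq_empty _)) (Or.inr (Set.range_eq_empty _)) h0 x
    (by rwa [Set.range_eq_empty (f := (Empty.elim : Empty → M)), Set.empty_union])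
  refine ⟨x', ?_⟩
  have e2 : ∀ (d : Fin m → M) (y : M),
      Fin.snoc d y = (Sum.elim (Sum.elim (Empty.elim : Empty → M) d) fun _ : Unit => y) ∘
        (fun i : Fin (m + 1) =>
          Fin.lastCases (Sum.inr ()) (fun j => Sum.inl (Sum.inr j)) i) := by
    intro d y; funext i
    refine Fin.lastCases ?_ (fun j => ?_) i
    · simp
    · simp
  rw [e2, e2]; exact hx'.comp' _

variable {n : ℕ} {b b' : Fin n → M}

/-- The invariant of the back-and-forth construction. -/
def Inv (L : FirstOrder.Language) {M : Type*} [L.Structure M] (P : Pregeom M)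
    (b b' : Fin n → M) (k : ℕ) (c c' : Fin (n + k) → M) : Prop :=
  EqQF L c c' ∧ (∀ i, c i ∈ P.cl (Set.range b)) ∧ (∀ i, c' i ∈ P.cl (Set.range b')) ∧
    (∀ (j : ℕ) (hj : j < n),
      c ⟨j, by omega⟩ = b ⟨j, hj⟩ ∧ c' ⟨j, by omega⟩ = b' ⟨j, hj⟩)

theorem cons_of_snoc {k : ℕ} {c c' : Fin (n + k) → M} {x x' : M}
    (E : EqQF L (Fin.snoc c x) (Fin.snoc c' x'))
    (hc : ∀ (j : ℕ) (hj : j < n), c ⟨j, by omega⟩ = b ⟨j, hj⟩)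
    (hc' : ∀ (j : ℕ) (hj : j < n), c' ⟨j, by omega⟩ = b' ⟨j, hj⟩) :
    EqQF L (Fin.cons x b) (Fin.cons x' b') := by
  have e : ∀ (d : Fin (n + k) → M) (y : M) (a : Fin n → M),
      (∀ (j : ℕ) (hj : j < n), d ⟨j, by omega⟩ = a ⟨j, hj⟩) →
      Fin.cons y a = (Fin.snoc d y : Fin (n + k + 1) → M) ∘
        (fun i : Fin (n + 1) =>
          Fin.cases (Fin.last (n + k)) (fun j : Fin n => (⟨j.1, by omega⟩ : Fin (n + k + 1))) i) := by
    intro d y a ha; funext i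
    refine Fin.cases ?_ (fun j => ?_) i
    · simp
    · have h1 : ((⟨j.1, by omega⟩ : Fin (n + k + 1))) = Fin.castSucc ⟨j.1, by omega⟩ := rfl
      simp only [Function.comp_apply, Fin.cases_succ, Fin.cons_succ, h1, Fin.snoc_castSucc]
      rw [ha j.1 j.2]
  rw [e c x b hc, e c' x' b' hc']
  exact E.comp' _

theorem step_ex (h1 : QM1 L M P) (h5 : QM5 L M P) (s s' : ℕ → M)
    (hs : Set.range s = P.cl (Set.range b)) (hs' : Set.range s' = P.cl (Set.range b'))
    (k : ℕ) (c c' : Fin (n + k) → M) (hI : Inv L P b b' k c c') :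
    ∃ q : M × M, Inv L P b b' (k + 1) (Fin.snoc c q.1) (Fin.snoc c' q.2) ∧
      (k % 2 = 0 → q.1 = s (k / 2)) ∧ (k % 2 = 1 → q.2 = s' (k / 2)) := by
  obtain ⟨E, hm, hm', hpre⟩ := hI
  have hrb : Set.range b ⊆ Set.range c := by
    rintro y ⟨i, rfl⟩
    exact ⟨⟨i.1, by omega⟩, (hpre i.1 i.2).1⟩
  have hrb' : Set.range b' ⊆ Set.range c' := by
    rintro y ⟨i, rfl⟩
    exact ⟨⟨i.1, by omega⟩, (hpre i.1 i.2).2⟩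
  have hsub : P.cl (Set.range b) ⊆ P.cl (Set.range c) := P.mono hrb
  have hsub' : P.cl (Set.range b') ⊆ P.cl (Set.range c') := P.mono hrb'
  have hpre1 : ∀ (q : M × M) (j : ℕ) (hj : j < n),
      (Fin.snoc c q.1 : Fin (n + k + 1) → M) ⟨j, by omega⟩ = b ⟨j, hj⟩ ∧
      (Fin.snoc c' q.2 : Fin (n + k + 1) → M) ⟨j, by omega⟩ = b' ⟨j, hj⟩ := by
    intro q j hj
    have h1 : ((⟨j, by omega⟩ : Fin (n + k + 1))) = Fin.castSucc ⟨j, by omega⟩ := rfl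
    rw [h1, Fin.snoc_castSucc, Fin.snoc_castSucc]
    exact hpre j hj
  have hmem : ∀ (q : M × M), EqQF L (Fin.snoc c q.1) (Fin.snoc c' q.2) →
      (q.1 ∈ P.cl (Set.range b) ↔ q.2 ∈ P.cl (Set.range b')) := by
    intro q E'
    exact h1 n q.1 q.2 b b' (cons_of_snoc E' (fun j hj => (hpre j hj).1)
      (fun j hj => (hpre j hj).2))
  by_cases hk : k % 2 = 0
  · set x := s (k / 2) with hxdef
    have hxC : x ∈ P.cl (Set.range b) := hs ▸ Set.mem_range_self _
    obtain ⟨x', E'⟩ := ext_step h5 E x (hsub hxC)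
    refine ⟨(x, x'), ⟨E', ?_, ?_, hpre1 (x, x')⟩, fun _ => rfl, fun hx => by omega⟩
    · intro i
      refine Fin.lastCases ?_ (fun j => ?_) i
      · rw [Fin.snoc_last]; exact hxC
      · rw [Fin.snoc_castSucc]; exact hm j
    · intro i
      refine Fin.lastCases ?_ (fun j => ?_) i
      · rw [Fin.snoc_last]; exact (hmem (x, x') E').1 hxC
      · rw [Fin.snoc_castSucc]; exact hm' j
  · set x' := s' (k / 2) with hxdef
    have hxC : x' ∈ P.cl (Set.range b') := hs' ▸ Set.mem_range_self _
    obtain ⟨x, E''⟩ := ext_step h5 E.symm' x' (hsub' hxC)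
    have E' : EqQF L (Fin.snoc c x) (Fin.snoc c' x') := E''.symm'
    refine ⟨(x, x'), ⟨E', ?_, ?_, hpre1 (x, x')⟩, fun hx => absurd hx hk, fun _ => rfl⟩
    · intro i
      refine Fin.lastCases ?_ (fun j => ?_) i
      · rw [Fin.snoc_last]; exact (hmem (x, x') E').2 hxC
      · rw [Fin.snoc_castSucc]; exact hm j
    · intro i
      refine Fin.lastCases ?_ (fun j => ?_) i
      · rw [Fin.snoc_last]; exact hxC
      · rw [Fin.snoc_castSucc]; exact hm' j

end Aux2
section Aux3
set_option linter.unusedSectionVars false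
set_option maxHeartbeats 1000000

variable {L} {M} [L.Structure M] {P : Pregeom M} {n : ℕ} {b b' : Fin n → M}

variable (h1 : QM1 L M P) (h5 : QM5 L M P) (hbb' : EqQF L b b') (s s' : ℕ → M)
  (hs : Set.range s = P.cl (Set.range b)) (hs' : Set.range s' = P.cl (Set.range b'))

/-- One step of the back-and-forth. -/
noncomputable def bfStep (k : ℕ)
    (p : {p : (Fin (n + k) → M) × (Fin (n + k) → M) // Inv L P b b' k p.1 p.2}) :
    {p : (Fin (n + (k + 1)) → M) × (Fin (n + (k + 1)) → M) // Inv L P b b' (k + 1) p.1 p.2} :=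
  let q := Classical.choose (step_ex h1 h5 s s' hs hs' k p.1.1 p.1.2 p.2)
  ⟨(Fin.snoc p.1.1 q.1, Fin.snoc p.1.2 q.2),
    (Classical.choose_spec (step_ex h1 h5 s s' hs hs' k p.1.1 p.1.2 p.2)).1⟩

/-- The back-and-forth sequence. -/
noncomputable def bf :
    ∀ k : ℕ, {p : (Fin (n + k) → M) × (Fin (n + k) → M) // Inv L P b b' k p.1 p.2} :=
  fun k => Nat.rec
    ⟨(b, b'), hbb', fun i => P.subset_cl _ (Set.mem_range_self i),
      fun i => P.subset_cl _ (Set.mem_range_self i), fun j hj => ⟨rfl, rfl⟩⟩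
    (fun k p => bfStep h1 h5 s s' hs hs' k p) k

theorem bf_succ (k : ℕ) :
    (bf h1 h5 hbb' s s' hs hs' (k + 1)).1 =
      ((Fin.snoc (bf h1 h5 hbb' s s' hs hs' k).1.1
          (Classical.choose (step_ex h1 h5 s s' hs hs' k
            (bf h1 h5 hbb' s s' hs hs' k).1.1 (bf h1 h5 hbb' s s' hs hs' k).1.2
            (bf h1 h5 hbb' s s' hs hs' k).2)).1),
       (Fin.snoc (bf h1 h5 hbb' s s' hs hs' k).1.2
          (Classical.choose (step_ex h1 h5 s s' hs hs' k
            (bf h1 h5 hbb' s s' hs hs' k).1.1 (bf h1 h5 hbb' s s' hs hs' k).1.2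
            (bf h1 h5 hbb' s s' hs hs' k).2)).2)) := rfl

theorem bf_coh {k K : ℕ} (hkK : k ≤ K) (j : ℕ) (hj : j < n + k) (hj2 : j < n + K) :
    (bf h1 h5 hbb' s s' hs hs' K).1.1 ⟨j, hj2⟩ =
        (bf h1 h5 hbb' s s' hs hs' k).1.1 ⟨j, hj⟩ ∧
      (bf h1 h5 hbb' s s' hs hs' K).1.2 ⟨j, hj2⟩ =
        (bf h1 h5 hbb' s s' hs hs' k).1.2 ⟨j, hj⟩ := by
  induction K with
  | zero =>
    have : k = 0 := by omega
    subst this; exact ⟨rfl, rfl⟩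
  | succ K ih =>
    rcases Nat.lt_or_ge k (K + 1) with hlt | hge
    · have hk : k ≤ K := by omega
      have hj3 : j < n + K := by omega
      have hcs : (⟨j, hj2⟩ : Fin (n + (K + 1))) = Fin.castSucc ⟨j, hj3⟩ := rfl
      rw [bf_succ]
      constructor
      · show (Fin.snoc _ _ : Fin (n + K + 1) → M) ⟨j, hj2⟩ = _
        rw [hcs, Fin.snoc_castSucc]; exact (ih hk hj3).1
      · show (Fin.snoc _ _ : Fin (n + K + 1) → M) ⟨j, hj2⟩ = _
        rw [hcs, Fin.snoc_castSucc]; exact (ih hk hj3).2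
    · have : k = K + 1 := by omega
      subst this; exact ⟨rfl, rfl⟩

end Aux3
section Aux4
set_option linter.unusedSectionVars false
set_option maxHeartbeats 1000000

variable {L} {M} [L.Structure M] {P : Pregeom M}

theorem cl_range_countable (h3 : QM3 M P) {m : ℕ} (c : Fin m → M) :
    (P.cl (Set.range c)).Countable := by
  have e : Set.range c = ↑((Set.finite_range c).toFinset) := by simp
  rw [e]; exact h3 _

theorem generic_transfer [Uncountable M] (h1 : QM1 L M P) (h3 : QM3 M P)
    (h4 : QM4 L M P) (h5 : QM5 L M P) {n : ℕ} (hn : 0 < n) {b b' : Fin n → M}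
    (hbb' : EqQF L b b') (a' : M) (ha' : a' ∉ P.cl (Set.range b')) :
    ∃ a : M, a ∉ P.cl (Set.range b) ∧ EqQF L (Fin.cons a b) (Fin.cons a' b') := by
  obtain ⟨s, hs⟩ := (cl_range_countable h3 b).exists_eq_range
    ⟨b ⟨0, hn⟩, P.subset_cl _ (Set.mem_range_self _)⟩
  obtain ⟨s', hs'⟩ := (cl_range_countable h3 b').exists_eq_range
    ⟨b' ⟨0, hn⟩, P.subset_cl _ (Set.mem_range_self _)⟩
  replace hs := hs.symm
  replace hs' := hs'.symm
  set F : ∀ k : ℕ, {p : (Fin (n + k) → M) × (Fin (n + k) → M) //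
      Inv L P b b' k p.1 p.2} := bf h1 h5 hbb' s s' hs hs' with hF
  -- the enumerations
  set H : ℕ ⊕ Fin n → M :=
    Sum.elim (fun k => (F (k + 1)).1.1 ⟨n + k, by omega⟩) b with hH
  set H' : ℕ ⊕ Fin n → M :=
    Sum.elim (fun k => (F (k + 1)).1.2 ⟨n + k, by omega⟩) b' with hH'
  -- new elements appended at step k
  have hlast : ∀ k : ℕ,
      H (Sum.inl k) = (Classical.choose (step_ex h1 h5 s s' hs hs' k
          (F k).1.1 (F k).1.2 (F k).2)).1 ∧
      H' (Sum.inl k) = (Classical.choose (step_ex h1 h5 s s' hs hs' k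
          (F k).1.1 (F k).1.2 (F k).2)).2 := by
    intro k
    constructor
    · show (F (k + 1)).1.1 ⟨n + k, by omega⟩ = _
      rw [hF, bf_succ]
      show (Fin.snoc _ _ : Fin (n + k + 1) → M) ⟨n + k, by omega⟩ = _
      have : (⟨n + k, by omega⟩ : Fin (n + k + 1)) = Fin.last (n + k) := rfl
      rw [this, Fin.snoc_last]
    · show (F (k + 1)).1.2 ⟨n + k, by omega⟩ = _
      rw [hF, bf_succ]
      show (Fin.snoc _ _ : Fin (n + k + 1) → M) ⟨n + k, by omega⟩ = _
      have : (⟨n + k, by omega⟩ : Fin (n + k + 1)) = Fin.last (n + k) := rfl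
      rw [this, Fin.snoc_last]
  -- ranges
  have hrangeH : Set.range H = P.cl (Set.range b) := by
    apply Set.Subset.antisymm
    · rintro y ⟨z, rfl⟩
      cases z with
      | inl k => exact (F (k + 1)).2.2.1 _
      | inr i => exact P.subset_cl _ (Set.mem_range_self i)
    · intro y hy
      rw [← hs] at hy
      obtain ⟨j, rfl⟩ := hy
      refine ⟨Sum.inl (2 * j), ?_⟩
      rw [(hlast (2 * j)).1,
        ((Classical.choose_spec (step_ex h1 h5 s s' hs hs' (2 * j)
          (F (2 * j)).1.1 (F (2 * j)).1.2 (F (2 * j)).2)).2.1 (by omega))]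
      congr 1; omega
  have hrangeH' : Set.range H' = P.cl (Set.range b') := by
    apply Set.Subset.antisymm
    · rintro y ⟨z, rfl⟩
      cases z with
      | inl k => exact (F (k + 1)).2.2.2.1 _
      | inr i => exact P.subset_cl _ (Set.mem_range_self i)
    · intro y hy
      rw [← hs'] at hy
      obtain ⟨j, rfl⟩ := hy
      refine ⟨Sum.inl (2 * j + 1), ?_⟩
      rw [(hlast (2 * j + 1)).2,
        ((Classical.choose_spec (step_ex h1 h5 s s' hs hs' (2 * j + 1)
          (F (2 * j + 1)).1.1 (F (2 * j + 1)).1.2 (F (2 * j + 1)).2)).2.2 (by omega))]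
      congr 1; omega
  -- equality of qf types of the enumerations
  have hEH : EqQF L H H' := by
    intro φ hφ
    set K : ℕ := φ.freeVarFinset.sup (Sum.elim Nat.succ fun _ => 0) with hK
    have hKbound : ∀ k : ℕ, Sum.inl k ∈ φ.freeVarFinset → k < K := by
      intro k hk
      have := Finset.le_sup (f := (Sum.elim Nat.succ fun _ => 0 : ℕ ⊕ Fin n → ℕ)) hk
      exact this
    set r : ℕ ⊕ Fin n → Fin (n + K) := fun z =>
      Sum.elim (fun k => if h : k < K then (⟨n + k, by omega⟩ : Fin (n + K))
        else ⟨0, by omega⟩) (fun i => ⟨i.1, by omega⟩) z with hr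
    have hagree : ∀ z ∈ φ.freeVarFinset, H z = ((F K).1.1 ∘ r) z := by
      intro z hz
      cases z with
      | inl k =>
        have hk : k < K := hKbound k hz
        show H (Sum.inl k) = (F K).1.1 (if h : k < K then ⟨n + k, by omega⟩ else ⟨0, by omega⟩)
        rw [dif_pos hk]
        exact ((bf_coh h1 h5 hbb' s s' hs hs' (show k + 1 ≤ K by omega) (n + k)
          (by omega) (by omega)).1).symm
      | inr i =>
        show b i = (F K).1.1 ⟨i.1, by omega⟩
        exact (((F K).2.2.2.2 i.1 i.2).1.trans (by congr)).symm
    have hagree' : ∀ z ∈ φ.freeVarFinset, H' z = ((F K).1.2 ∘ r) z := by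
      intro z hz
      cases z with
      | inl k =>
        have hk : k < K := hKbound k hz
        show H' (Sum.inl k) = (F K).1.2 (if h : k < K then ⟨n + k, by omega⟩ else ⟨0, by omega⟩)
        rw [dif_pos hk]
        exact ((bf_coh h1 h5 hbb' s s' hs hs' (show k + 1 ≤ K by omega) (n + k)
          (by omega) (by omega)).2).symm
      | inr i =>
        show b' i = (F K).1.2 ⟨i.1, by omega⟩
        exact (((F K).2.2.2.2 i.1 i.2).2.trans (by congr)).symm
    calc φ.Realize H ↔ φ.Realize ((F K).1.1 ∘ r) := realize_ext φ hagree
      _ ↔ φ.Realize ((F K).1.2 ∘ r) := ((F K).2.1.comp' r) φ hφ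
      _ ↔ φ.Realize H' := (realize_ext φ hagree').symm
  -- pick a generic a
  obtain ⟨a, ha⟩ := exists_not_mem_countable (cl_range_countable h3 b)
  have hclH : P.cl (Set.range H) = Set.range H := by
    rw [hrangeH]; exact P.cl_idem _
  have hclH' : P.cl (Set.range H') = Set.range H' := by
    rw [hrangeH']; exact P.cl_idem _
  have key := h4 (ℕ ⊕ Fin n) H H' hclH hclH' hEH a a'
    (by rwa [hrangeH]) (by rwa [hrangeH'])
  refine ⟨a, ha, ?_⟩
  have e : ∀ (G : ℕ ⊕ Fin n → M) (d : Fin n → M) (y : M), (∀ i, G (Sum.inr i) = d i) →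
      Fin.cons y d = (Sum.elim G fun _ : Unit => y) ∘
        (fun i : Fin (n + 1) =>
          Fin.cases (Sum.inr ()) (fun j : Fin n => Sum.inl (Sum.inr j)) i) := by
    intro G d y hG; funext i
    refine Fin.cases ?_ (fun j => ?_) i
    · simp
    · simp [hG j]
  rw [e H b a (fun i => rfl), e H' b' a' (fun i => rfl)]
  exact key.comp' _

end Aux4
/-- if `(M, cl_p)` is a quasiminimal pregeometry structure, then the
generic type does not split over ∅: tuples of the same type give parameter sets of the
same (countable/co-countable) size for every formula. -/
theorem generic_nonsplitting (L : FirstOrder.Language) (M : Type*) [L.Structure M]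
    [Uncountable M] (hq : Quasiminimal L M) (hqe : QEr L M) (P : Pregeom M)
    (hP : P.cl = clp L M) (h : IsQPS L M P) :
    ∀ (n : ℕ) (b b' : Fin n → M), EqFull L b b' →
      ∀ φ : L.Formula (Fin (n + 1)),
        ((solSet L M φ b).Countable ↔ (solSet L M φ b').Countable) := by
  have dir : ∀ (n : ℕ) (b b' : Fin n → M), EqFull L b b' →
      ∀ φ : L.Formula (Fin (n + 1)),
        (solSet L M φ b).Countable → (solSet L M φ b').Countable := by
    intro n b b' hfull φ hcount
    rcases Nat.eq_zero_or_pos n with hn | hn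
    · subst hn
      have : b = b' := funext fun i => i.elim0
      rwa [← this]
    by_contra hnc
    have hcoc : (solSet L M φ b')ᶜ.Countable := (hq n φ b').resolve_left hnc
    obtain ⟨a', ha'⟩ := exists_not_mem_countable
      (hcoc.union (cl_range_countable h.qm3 b'))
    have ha'sol : a' ∈ solSet L M φ b' := by
      by_contra hcon
      exact ha' (Set.mem_union_left _ hcon)
    have ha'cl : a' ∉ P.cl (Set.range b') := fun hcon =>
      ha' (Set.mem_union_right _ hcon)
    have hbb' : EqQF L b b' := fun ψ _ => hfull ψ
    obtain ⟨a, hacl, hE⟩ := generic_transfer h.qm1 h.qm3 h.qm4 h.qm5 hn hbb' a' ha'cl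
    have hafull : EqFull L (Fin.cons a b) (Fin.cons a' b') := hqe (n + 1) _ _ hE
    have hasol : a ∈ solSet L M φ b := (hafull φ).2 ha'sol
    have : a ∈ P.cl (Set.range b) := by
      rw [hP]
      exact ⟨n, φ, b, fun i => Set.mem_range_self i, hcount, hasol⟩
    exact hacl this
  intro n b b' hfull φ
  exact ⟨dir n b b' hfull φ, dir n b' b (fun ψ => (hfull ψ).symm) φ⟩

end QM
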